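/- Let T be a flat torus (quotient of ℝ² by the lattice generated by v₁, v₂) that is perfectly periodic, partitioned into finitely many measurable sets F₁,…,F_n each of diameter < 1 in the torus metric ρ. Let G be a graph on vertices p₁,…,p_n with p_i ∈ F_i such that whenever (p_i,p_j) is not an edge, there are no q₁ ∈ F_i, q₂ ∈ F_j with ρ(q₁,q₂) = 1. If M is an independent set of G, then the planar set Â obtained by tiling the plane with copies of A = ⋃_{p_i ∈ M} F_i under the lattice translations is 1-avoiding, i.e., contains no two points at Euclidean distance exactly 1. -/
import Mathlib


theorem tiling_is_one_avoiding
    (v₁ v₂ : EuclideanSpace ℝ (Fin 2))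
    (hind : LinearIndependent ℝ ![v₁, v₂])
    (ρ : EuclideanSpace ℝ (Fin 2) → EuclideanSpace ℝ (Fin 2) → ℝ)
    (hρ : ∀ p q, ρ p q =
      sInf {d : ℝ | ∃ m n : ℤ, d = ‖q - p + (m:ℝ) • v₁ + (n:ℝ) • v₂‖})
    (hperf : ∀ p q, ρ p q ≠ 1 →
      ∀ m n : ℤ, ‖q - p + (m:ℝ) • v₁ + (n:ℝ) • v₂‖ ≠ 1)
    (N : ℕ) (F : Fin N → Set (EuclideanSpace ℝ (Fin 2)))
    (hmeas : ∀ i, MeasurableSet (F i))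
    (hdiam : ∀ i, ∀ q₁ ∈ F i, ∀ q₂ ∈ F i, ρ q₁ q₂ < 1)
    (hpart : (⋃ i, F i) =
      {p | ∃ x ∈ Set.Ico (0:ℝ) 1, ∃ y ∈ Set.Ico (0:ℝ) 1, p = x • v₁ + y • v₂})
    (hdisj : Pairwise (Function.onFun Disjoint F))
    (p : Fin N → EuclideanSpace ℝ (Fin 2)) (hp : ∀ i, p i ∈ F i)
    (Adj : Fin N → Fin N → Prop)
    (hedge : ∀ i j, i ≠ j → ¬ Adj i j →
      ∀ q₁ ∈ F i, ∀ q₂ ∈ F j, ρ q₁ q₂ ≠ 1)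
    (M : Set (Fin N)) (hM : ∀ i ∈ M, ∀ j ∈ M, i ≠ j → ¬ Adj i j) :
    ∀ P ∈ (⋃ (m : ℤ) (n : ℤ) (i ∈ M),
        (fun q => q + (m:ℝ) • v₁ + (n:ℝ) • v₂) '' F i),
      ∀ Q ∈ (⋃ (m : ℤ) (n : ℤ) (i ∈ M),
        (fun q => q + (m:ℝ) • v₁ + (n:ℝ) • v₂) '' F i),
      dist P Q ≠ 1 := by
  intro P hP Q hQ
  simp only [Set.mem_iUnion, Set.mem_image] at hP hQ
  obtain ⟨m₁, n₁, i, hi, q₁, hq₁, rfl⟩ := hP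
  obtain ⟨m₂, n₂, j, hj, q₂, hq₂, rfl⟩ := hQ
  have hρne : ρ q₁ q₂ ≠ 1 := by
    by_cases hij : i = j
    · subst hij
      exact ne_of_lt (hdiam i q₁ hq₁ q₂ hq₂)
    · exact hedge i j hij (hM i hi j hj hij) q₁ hq₁ q₂ hq₂
  have key := hperf q₁ q₂ hρne (m₂ - m₁) (n₂ - n₁)
  have hd : dist (q₁ + (m₁:ℝ) • v₁ + (n₁:ℝ) • v₂) (q₂ + (m₂:ℝ) • v₁ + (n₂:ℝ) • v₂)
      = ‖q₂ - q₁ + ((m₂ - m₁ : ℤ) : ℝ) • v₁ + ((n₂ - n₁ : ℤ) : ℝ) • v₂‖ := by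
    rw [dist_eq_norm, ← norm_neg]
    congr 1
    push_cast
    module
  rw [hd]
  exact key
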